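/- Let a, b, c ∈ ℝ. If a·x² + b·log(x²) + c = 0 holds for three distinct positive values of x, then a = b = c = 0. -/

import Mathlib

lemma key_sorted (a b c u v w : ℝ) (hu : 0 < u) (huv : u < v) (hvw : v < w)
    (h1 : a * u + b * Real.log u + c = 0)
    (h2 : a * v + b * Real.log v + c = 0)
    (h3 : a * w + b * Real.log w + c = 0) :
    a = 0 ∧ b = 0 ∧ c = 0 := by
  have hv : 0 < v := hu.trans huv
  have hw : 0 < w := hv.trans hvw
  have e1 : a * (v - u) + b * (Real.log v - Real.log u) = 0 := by linarith
  have e2 : a * (w - v) + b * (Real.log w - Real.log v) = 0 := by linarith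
  by_cases hb : b = 0
  · subst hb
    have ha : a = 0 := by
      have : a * (v - u) = 0 := by linarith
      rcases mul_eq_zero.1 this with h | h
      · exact h
      · linarith
    subst ha
    refine ⟨rfl, rfl, by linarith⟩
  · exfalso
    set p := (w - v) / (w - u) with hp
    set q := (v - u) / (w - u) with hq
    have hwu : (0:ℝ) < w - u := by linarith
    have hp0 : 0 < p := div_pos (by linarith) hwu
    have hq0 : 0 < q := div_pos (by linarith) hwu
    have hpq : p + q = 1 := by rw [hp, hq, ← add_div]; field_simp; ring
    have hcomb : p • u + q • w = v := by
      show p * u + q * w = v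
      rw [hp, hq]
      field_simp
      ring
    have hconc := strictConcaveOn_log_Ioi.2 (Set.mem_Ioi.2 hu) (Set.mem_Ioi.2 hw)
      (ne_of_lt (huv.trans hvw)) hp0 hq0 hpq
    rw [hcomb] at hconc
    simp only [smul_eq_mul] at hconc
    -- from e1, e2: log v - log u = -(a/b)(v-u), log w - log v = -(a/b)(w-v)
    have l1 : Real.log v - Real.log u = -(a / b) * (v - u) := by
      field_simp
      linarith
    have l2 : Real.log w - Real.log v = -(a / b) * (w - v) := by
      field_simp
      linarith
    have : p * Real.log u + q * Real.log w = Real.log v := by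
      have hlu : Real.log u = Real.log v + (a / b) * (v - u) := by linarith
      have hlw : Real.log w = Real.log v - (a / b) * (w - v) := by linarith
      rw [hlu, hlw, hp, hq]
      field_simp
      ring
    linarith

theorem stmt2 (a b c : ℝ) (x y z : ℝ) (hx : 0 < x) (hy : 0 < y) (hz : 0 < z)
    (hxy : x ≠ y) (hxz : x ≠ z) (hyz : y ≠ z)
    (h1 : a * x ^ 2 + b * Real.log (x ^ 2) + c = 0)
    (h2 : a * y ^ 2 + b * Real.log (y ^ 2) + c = 0)
    (h3 : a * z ^ 2 + b * Real.log (z ^ 2) + c = 0) :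
    a = 0 ∧ b = 0 ∧ c = 0 := by
  have hx2 : 0 < x ^ 2 := by positivity
  have hy2 : 0 < y ^ 2 := by positivity
  have hz2 : 0 < z ^ 2 := by positivity
  have dxy : x ^ 2 ≠ y ^ 2 := fun h => hxy (by nlinarith)
  have dxz : x ^ 2 ≠ z ^ 2 := fun h => hxz (by nlinarith)
  have dyz : y ^ 2 ≠ z ^ 2 := fun h => hyz (by nlinarith)
  rcases lt_trichotomy (x ^ 2) (y ^ 2) with hab | hab | hab
  · rcases lt_trichotomy (y ^ 2) (z ^ 2) with hbc | hbc | hbc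
    · exact key_sorted a b c _ _ _ hx2 hab hbc h1 h2 h3
    · exact absurd hbc dyz
    · rcases lt_trichotomy (x ^ 2) (z ^ 2) with hac | hac | hac
      · exact key_sorted a b c _ _ _ hx2 hac hbc h1 h3 h2
      · exact absurd hac dxz
      · exact key_sorted a b c _ _ _ hz2 hac hab h3 h1 h2
  · exact absurd hab dxy
  · rcases lt_trichotomy (x ^ 2) (z ^ 2) with hac | hac | hac
    · exact key_sorted a b c _ _ _ hy2 hab hac h2 h1 h3
    · exact absurd hac dxz
    · rcases lt_trichotomy (y ^ 2) (z ^ 2) with hbc | hbc | hbc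
      · exact key_sorted a b c _ _ _ hy2 hbc hac h2 h3 h1
      · exact absurd hbc dyz
      · exact key_sorted a b c _ _ _ hz2 hbc hab h3 h2 h1
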